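/- arXiv:1808.02404 — 12 statements merged into one kernel-verified Lean document; each statement's English description precedes it below -/
import Mathlib

section
/- Let G be a group acting by homeomorphisms on a compact Hausdorff space X. If F is a closed subset and A is an open subset with F ≺ A (i.e., there exist finitely many open sets U₁,...,Uₙ covering F and group elements g₁,...,gₙ such that the sets gᵢUᵢ are pairwise disjoint subsets of A), then there exists an open set M with F ≺ M and the closure of M contained in A. -/
open Pointwise

/-- `Subeq G F O`: the set `F` is subequivalent to `O`, i.e. there is a finite family of
open sets covering `F` and group elements translating them to pairwise disjoint subsets of `O`. -/
def Subeq (G : Type*) {X : Type*} [Group G] [MulAction G X] [TopologicalSpace X]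
    (F O : Set X) : Prop :=
  ∃ (n : ℕ) (U : Fin n → Set X) (g : Fin n → G),
    (∀ i, IsOpen (U i)) ∧ F ⊆ ⋃ i, U i ∧ (∀ i, g i • U i ⊆ O) ∧
      Pairwise fun i j => Disjoint (g i • U i) (g j • U j)

theorem subeq_exists_open_closure_subset
    {G X : Type*} [Group G] [TopologicalSpace X] [CompactSpace X] [T2Space X]
    [MulAction G X] [ContinuousConstSMul G X]
    (F A : Set X) (hF : IsClosed F) (hA : IsOpen A) (h : Subeq G F A) :
    ∃ M : Set X, IsOpen M ∧ Subeq G F M ∧ closure M ⊆ A := by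
  obtain ⟨n, U, g, hUo, hFU, hUA, hdisj⟩ := h
  obtain ⟨W, hFW, hWo, hWc⟩ := exists_subset_iUnion_closure_subset hF hUo
    (fun x _ => Set.finite_univ.subset (Set.subset_univ _)) hFU
  have hWU : ∀ i, W i ⊆ U i := fun i => subset_closure.trans (hWc i)
  refine ⟨⋃ i, g i • W i, isOpen_iUnion fun i => (hWo i).smul _,
    ⟨n, W, g, fun i => (hWo i), hFW, fun i => Set.subset_iUnion (fun j => g j • W j) i,
      fun i j hij => (hdisj hij).mono (Set.smul_set_mono (hWU i)) (Set.smul_set_mono (hWU j))⟩,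
    ?_⟩
  have : closure (⋃ i, g i • W i) = ⋃ i, closure (g i • W i) := by
    exact closure_iUnion_of_finite _
  rw [this]
  refine Set.iUnion_subset fun i => ?_
  rw [closure_smul]
  exact (Set.smul_set_mono (hWc i)).trans (hUA i)
end

section
/- Let G be a group acting by homeomorphisms on a compact Hausdorff space X. If F is closed, N and B are open, F ≺ N, and the closure of N satisfies closure(N) ≺ B, then F ≺ B. -/
open Pointwise

theorem subeq_trans_closure
    {G X : Type*} [Group G] [TopologicalSpace X] [CompactSpace X] [T2Space X]
    [MulAction G X] [ContinuousConstSMul G X]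
    (F N B : Set X) (hF : IsClosed F) (hN : IsOpen N) (hB : IsOpen B)
    (h1 : Subeq G F N) (h2 : Subeq G (closure N) B) : Subeq G F B := by
  obtain ⟨n, U, g, hUopen, hFcov, hUsub, hUdisj⟩ := h1
  obtain ⟨m, V, v, hVopen, hNcov, hVsub, hVdisj⟩ := h2
  set e := (finProdFinEquiv : Fin n × Fin m ≃ Fin (n * m))
  refine ⟨n * m,
    fun k => U (e.symm k).1 ∩ (g (e.symm k).1)⁻¹ • V (e.symm k).2,
    fun k => v (e.symm k).2 * g (e.symm k).1, ?_, ?_, ?_, ?_⟩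
  · intro k
    exact (hUopen _).inter ((hVopen _).smul _)
  · intro x hx
    obtain ⟨_, ⟨i, rfl⟩, hxi⟩ := hFcov hx
    have : g i • x ∈ closure N := subset_closure (hUsub i ⟨x, hxi, rfl⟩)
    obtain ⟨_, ⟨j, rfl⟩, hxj⟩ := hNcov this
    exact Set.mem_iUnion.2 ⟨e (i, j), by
      simp only [Equiv.symm_apply_apply]
      exact ⟨hxi, Set.mem_inv_smul_set_iff.2 hxj⟩⟩
  · intro k
    rw [mul_smul, Set.smul_set_inter, smul_inv_smul]
    exact (Set.smul_set_mono Set.inter_subset_right).trans (hVsub _)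
  · intro k k' hkk
    have hsub : ∀ (i : Fin n) (j : Fin m),
        (v j * g i) • (U i ∩ (g i)⁻¹ • V j) = v j • (g i • U i ∩ V j) := by
      intro i j
      rw [mul_smul, Set.smul_set_inter, smul_inv_smul]
    rw [hsub, hsub]
    rcases eq_or_ne (e.symm k).2 (e.symm k').2 with hj | hj
    · have hi : (e.symm k).1 ≠ (e.symm k').1 := by
        intro hi
        exact hkk (e.symm.injective (Prod.ext hi hj))
      rw [← hj]
      exact Set.disjoint_smul_set.2 <| ((hUdisj hi).mono
        Set.inter_subset_left Set.inter_subset_left)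
    · exact ((hVdisj hj).mono (Set.smul_set_mono Set.inter_subset_right)
        (Set.smul_set_mono Set.inter_subset_right))
end

section
/- Let G be a group acting by homeomorphisms on a compact Hausdorff space X. The subequivalence relation on open sets is transitive: if A ≺ B and B ≺ C for nonempty open sets A, B, C, then A ≺ C. -/
open Pointwise

/-- Subequivalence for open sets: `V ≺ O` iff every closed subset of `V` is subequivalent to `O`. -/
def SubeqOpen (G : Type*) {X : Type*} [Group G] [MulAction G X] [TopologicalSpace X]
    (V O : Set X) : Prop :=
  ∀ F : Set X, IsClosed F → F ⊆ V → Subeq G F O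

theorem subeqOpen_trans
    {G X : Type*} [Group G] [TopologicalSpace X] [CompactSpace X] [T2Space X]
    [MulAction G X] [ContinuousConstSMul G X]
    (A B C : Set X) (hA : IsOpen A) (hB : IsOpen B) (hC : IsOpen C)
    (hAne : A.Nonempty) (hBne : B.Nonempty) (hCne : C.Nonempty)
    (hAB : SubeqOpen G A B) (hBC : SubeqOpen G B C) : SubeqOpen G A C := by
  intro F hF hFA
  obtain ⟨n, U, g, hUo, hFU, hUB, hUd⟩ := hAB F hF hFA
  obtain ⟨V, hFV, hVc, hVU⟩ := exists_subset_iUnion_closed_subset hF hUo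
    (fun x _ => (Set.finite_univ (α := Fin n)).subset (Set.subset_univ _)) hFU
  have hKc : IsClosed (⋃ i, g i • V i) := isClosed_iUnion_of_finite fun i => (hVc i).smul _
  have hKB : (⋃ i, g i • V i) ⊆ B := Set.iUnion_subset fun i =>
    (Set.smul_set_mono (hVU i)).trans (hUB i)
  obtain ⟨m, W, h, hWo, hKW, hWC, hWd⟩ := hBC _ hKc hKB
  refine ⟨n * m, (fun p : Fin n × Fin m => U p.1 ∩ (g p.1)⁻¹ • W p.2) ∘ finProdFinEquiv.symm,
    (fun p : Fin n × Fin m => h p.2 * g p.1) ∘ finProdFinEquiv.symm, ?_, ?_, ?_, ?_⟩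
  · exact fun k => ((hUo _).inter ((hWo _).smul _))
  · intro x hx
    obtain ⟨i, hi⟩ := Set.mem_iUnion.1 (hFV hx)
    have : g i • x ∈ ⋃ j, W j := hKW (Set.mem_iUnion.2 ⟨i, Set.smul_mem_smul_set hi⟩)
    obtain ⟨j, hj⟩ := Set.mem_iUnion.1 this
    exact Set.mem_iUnion.2 ⟨finProdFinEquiv (i, j), by
      simp only [Function.comp_apply, Equiv.symm_apply_apply]
      exact ⟨hVU i hi, Set.mem_inv_smul_set_iff.2 hj⟩⟩
  · intro k
    simp only [Function.comp_apply, mul_smul]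
    exact (Set.smul_set_mono ((Set.smul_set_mono Set.inter_subset_right).trans
      (smul_inv_smul _ _).subset)).trans (hWC _)
  · intro k l hkl
    simp only [Function.comp_apply, mul_smul]
    set p := finProdFinEquiv.symm k
    set q := finProdFinEquiv.symm l
    have hpq : p ≠ q := fun e => hkl (finProdFinEquiv.symm.injective e)
    rcases eq_or_ne p.2 q.2 with hj | hj
    · have hi : p.1 ≠ q.1 := fun e => hpq (Prod.ext e hj)
      rw [hj]
      refine ((Set.disjoint_smul_set (a := h q.2)).2 (hUd hi)).mono ?_ ?_ <;>
        exact Set.smul_set_mono (Set.smul_set_mono Set.inter_subset_left)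
    · refine (hWd hj).mono ?_ ?_ <;>
        exact Set.smul_set_mono ((Set.smul_set_mono Set.inter_subset_right).trans
          (smul_inv_smul _ _).subset)
end

section
/- Let G be a group acting by homeomorphisms on a compact Hausdorff space X, and suppose the action has paradoxical comparison. Then there is no G-invariant regular Borel probability measure on X. -/
open Pointwise MeasureTheory

/-- The action has paradoxical comparison: every closed subset of a nonempty open set `O`
is subequivalent to each of two disjoint nonempty open subsets of `O`. -/
def ParadoxicalComparison (G : Type*) {X : Type*} [Group G] [MulAction G X]
    [TopologicalSpace X] : Prop :=
  ∀ O : Set X, IsOpen O → O.Nonempty → ∀ F : Set X, IsClosed F → F ⊆ O →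
    ∃ O₁ O₂ : Set X, IsOpen O₁ ∧ IsOpen O₂ ∧ O₁.Nonempty ∧ O₂.Nonempty ∧
      O₁ ⊆ O ∧ O₂ ⊆ O ∧ Disjoint O₁ O₂ ∧ Subeq G F O₁ ∧ Subeq G F O₂

theorem paradoxicalComparison_no_invariant_measure
    {G X : Type*} [Group G] [TopologicalSpace X] [CompactSpace X] [T2Space X]
    [MulAction G X] [ContinuousConstSMul G X]
    [MeasurableSpace X] [BorelSpace X]
    (h : ParadoxicalComparison G (X := X)) :
    ¬ ∃ μ : MeasureTheory.Measure X, MeasureTheory.IsProbabilityMeasure μ ∧ μ.Regular ∧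
        ∀ (g : G) (A : Set X), μ (g • A) = μ A := by
  rintro ⟨μ, hprob, hreg, hinv⟩
  have key : ∀ F O : Set X, Subeq G F O → μ F ≤ μ O := by
    rintro F O ⟨n, U, g, hUopen, hFsub, hsubO, hdisj⟩
    calc μ F ≤ μ (⋃ i, U i) := measure_mono hFsub
      _ ≤ ∑ i, μ (U i) := measure_iUnion_fintype_le μ U
      _ = ∑ i, μ (g i • U i) := by simp [hinv]
      _ = μ (⋃ i, g i • U i) := by
          rw [measure_iUnion hdisj (fun i => ((hUopen i).smul (g i)).measurableSet),
            tsum_fintype]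
      _ ≤ μ O := measure_mono (Set.iUnion_subset hsubO)
  have h1 : μ Set.univ = 1 := hprob.measure_univ
  have hne : Nonempty X := by
    by_contra hX
    rw [not_nonempty_iff] at hX
    simp [Set.univ_eq_empty_iff.2 hX] at h1
  have hlt : (1 / 2 : ENNReal) < μ Set.univ := by
    rw [h1]; norm_num
  obtain ⟨K, -, hKcomp, hK⟩ := hreg.innerRegular isOpen_univ _ hlt
  obtain ⟨O₁, O₂, hO₁, hO₂, -, -, -, -, hd, hs1, hs2⟩ :=
    h Set.univ isOpen_univ Set.univ_nonempty K hKcomp.isClosed (Set.subset_univ K)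
  have h12 : μ O₁ + μ O₂ ≤ 1 := by
    rw [← measure_union hd hO₂.measurableSet, ← h1]
    exact measure_mono (Set.subset_univ _)
  have hK1 : μ K ≤ μ O₁ := key K O₁ hs1
  have hK2 : μ K ≤ μ O₂ := key K O₂ hs2
  have : (1 : ENNReal) < 1 := by
    calc (1 : ENNReal) = 1 / 2 + 1 / 2 := (ENNReal.add_halves 1).symm
      _ < μ K + μ K := by
          exact ENNReal.add_lt_add hK hK
      _ ≤ μ O₁ + μ O₂ := add_le_add hK1 hK2
      _ ≤ 1 := h12
  exact lt_irrefl _ this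
end

section
/- Let G be a group acting by homeomorphisms on a compact Hausdorff space X such that there is no G-invariant regular Borel probability measure on X. If the action has dynamical comparison, then the action is minimal: every orbit is dense. -/
open Pointwise MeasureTheory

theorem dynamicalComparison_minimal_of_no_invariant_measure
    {G X : Type*} [Group G] [TopologicalSpace X] [CompactSpace X] [T2Space X]
    [MulAction G X] [ContinuousConstSMul G X] [MeasurableSpace X] [BorelSpace X]
    (hnom : ¬ ∃ μ : Measure X, IsProbabilityMeasure μ ∧ μ.Regular ∧
        ∀ (g : G) (A : Set X), μ (g • A) = μ A)
    (hdc : ∀ V O : Set X, IsOpen V → IsOpen O → O.Nonempty →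
      (∀ μ : Measure X, IsProbabilityMeasure μ → μ.Regular →
        (∀ (g : G) (A : Set X), μ (g • A) = μ A) → μ V < μ O) →
      ∀ F : Set X, IsClosed F → F ⊆ V → Subeq G F O) :
    ∀ x : X, Dense (MulAction.orbit G x) := by
  intro x
  by_contra hdense
  have hCne : closure (MulAction.orbit G x) ≠ Set.univ := by
    intro h
    exact hdense (dense_iff_closure_eq.mpr h)
  have hOne : ((closure (MulAction.orbit G x))ᶜ).Nonempty := by
    rwa [Set.nonempty_compl]
  have hmeas : ∀ μ : Measure X, IsProbabilityMeasure μ → μ.Regular →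
      (∀ (g : G) (A : Set X), μ (g • A) = μ A) →
      μ (Set.univ) < μ ((closure (MulAction.orbit G x))ᶜ) := by
    intro μ hp hr hinv
    exact absurd ⟨μ, hp, hr, hinv⟩ hnom
  obtain ⟨n, U, g, hUopen, hcov, hsub, hdisj⟩ :=
    hdc Set.univ ((closure (MulAction.orbit G x))ᶜ) isOpen_univ
      (isOpen_compl_iff.mpr isClosed_closure) hOne hmeas Set.univ isClosed_univ
      subset_rfl
  obtain ⟨i, hi⟩ := Set.mem_iUnion.mp (hcov (Set.mem_univ x))
  have h1 : g i • x ∈ (closure (MulAction.orbit G x))ᶜ :=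
    hsub i (Set.smul_mem_smul_set hi)
  exact h1 (subset_closure (MulAction.mem_orbit x (g i)))
end

section
/- Let G be a group acting by homeomorphisms on an infinite compact Hausdorff space X. If the action is a strong boundary action (for every closed F ⊊ X and nonempty open O there is g ∈ G with gF ⊆ O), then the action is 2-filling: for any nonempty open U₁, U₂ there exist g₁, g₂ ∈ G with g₁U₁ ∪ g₂U₂ = X. -/
open Pointwise

theorem strongBoundary_two_filling
    {G X : Type*} [Group G] [TopologicalSpace X] [CompactSpace X] [T2Space X] [Infinite X]
    [MulAction G X] [ContinuousConstSMul G X]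
    (hsb : ∀ F : Set X, IsClosed F → F ≠ Set.univ → ∀ O : Set X, IsOpen O → O.Nonempty →
      ∃ g : G, g • F ⊆ O) :
    ∀ U₁ U₂ : Set X, IsOpen U₁ → U₁.Nonempty → IsOpen U₂ → U₂.Nonempty →
      ∃ g₁ g₂ : G, g₁ • U₁ ∪ g₂ • U₂ = Set.univ := by
  intro U₁ U₂ hU₁ hne₁ hU₂ hne₂
  -- pick two distinct points and disjoint open neighborhoods
  obtain ⟨x, y, hxy⟩ := Nontrivial.exists_pair_ne (α := X)
  obtain ⟨V₁, V₂, hV₁, hV₂, hxV₁, hyV₂, hdisj⟩ := t2_separation hxy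
  have h₁ := hsb U₁ᶜ hU₁.isClosed_compl
    (by simp only [Ne, Set.compl_univ_iff]; exact hne₁.ne_empty) V₁ hV₁ ⟨x, hxV₁⟩
  have h₂ := hsb U₂ᶜ hU₂.isClosed_compl
    (by simp only [Ne, Set.compl_univ_iff]; exact hne₂.ne_empty) V₂ hV₂ ⟨y, hyV₂⟩
  obtain ⟨g₁, hg₁⟩ := h₁
  obtain ⟨g₂, hg₂⟩ := h₂
  refine ⟨g₁, g₂, Set.eq_univ_of_forall fun z => ?_⟩
  by_contra hz
  simp only [Set.mem_union, not_or] at hz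
  have hz₁ : z ∈ V₁ := hg₁ (by rw [Set.smul_set_compl]; exact hz.1)
  have hz₂ : z ∈ V₂ := hg₂ (by rw [Set.smul_set_compl]; exact hz.2)
  exact hdisj.ne_of_mem hz₁ hz₂ rfl
end

section
/- Let G be a group acting by homeomorphisms on a compact Hausdorff space X with weak paradoxical comparison. Let F be a closed subset and O a nonempty open subset of X such that for every closed G-invariant subset Y of X, F ∩ Y ≠ ∅ implies O ∩ Y ≠ ∅. Then F ≺ O. -/
open Pointwise

/-- Weak paradoxical comparison: every closed set contained in the union of the
translates of a nonempty open set `O` is subequivalent to `O`. -/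
def WeakParadoxicalComparison (G : Type*) {X : Type*} [Group G] [MulAction G X]
    [TopologicalSpace X] : Prop :=
  ∀ F O : Set X, IsClosed F → IsOpen O → O.Nonempty → F ⊆ ⋃ g : G, g • O → Subeq G F O

theorem subeq_of_meets_invariant_subsets
    {G X : Type*} [Group G] [TopologicalSpace X] [CompactSpace X] [T2Space X]
    [MulAction G X] [ContinuousConstSMul G X]
    (hwpc : WeakParadoxicalComparison G (X := X))
    (F O : Set X) (hF : IsClosed F) (hO : IsOpen O) (hOne : O.Nonempty)
    (hmeet : ∀ Y : Set X, IsClosed Y → (∀ g : G, g • Y = Y) →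
      (F ∩ Y).Nonempty → (O ∩ Y).Nonempty) :
    Subeq G F O := by
  apply hwpc F O hF hO hOne
  intro x hx
  set Y := closure (MulAction.orbit G x) with hY
  have hinv : ∀ g : G, g • Y = Y := by
    intro g
    rw [hY, ← closure_smul, MulAction.smul_orbit]
  have hxY : x ∈ Y := subset_closure (MulAction.mem_orbit_self x)
  obtain ⟨y, hyO, hyY⟩ := hmeet Y isClosed_closure hinv ⟨x, hx, hxY⟩
  obtain ⟨z, hzO, hzorb⟩ := mem_closure_iff.mp hyY O hO hyO
  obtain ⟨g, rfl⟩ := hzorb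
  exact Set.mem_iUnion.mpr ⟨g⁻¹, ⟨g • x, hzO, by simp⟩⟩
end

section
/- Let β: G ↷ X be a minimal topologically free action on a compact Hausdorff space X (for each nontrivial g, the fixed point set of g has empty interior), and let α: G ↷ X × Y be the product action with the trivial action on compact Hausdorff Y. Then α is essentially free: its restriction to every nonempty G-invariant closed subset is topologically free. -/
open Pointwise

theorem product_action_essentially_free
    {G X : Type*} [Group G] [TopologicalSpace X] [CompactSpace X] [T2Space X]
    [MulAction G X] [ContinuousConstSMul G X]
    (hmin : ∀ x : X, Dense (MulAction.orbit G x))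
    (hfree : ∀ g : G, g ≠ 1 → interior {x : X | g • x = x} = ∅)
    (Y : Type*) [TopologicalSpace Y] [CompactSpace Y] [T2Space Y] :
    ∀ M : Set (X × Y), IsClosed M → M.Nonempty →
      (∀ g : G, (fun p : X × Y => (g • p.1, p.2)) '' M = M) →
      ∀ g : G, g ≠ 1 → ∀ U : Set (X × Y), IsOpen U →
        U ∩ M ⊆ {p : X × Y | g • p.1 = p.1} → U ∩ M = ∅ := by
  intro M hMc _hMne hinv g hg U hU hsub
  by_contra h
  obtain ⟨⟨x, y⟩, hxU, hxM⟩ := Set.nonempty_iff_ne_empty.2 h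
  rw [isOpen_prod_iff] at hU
  obtain ⟨V, W, hVo, hWo, hxV, hyW, hVW⟩ := hU x y hxU
  -- the slice {x' | (x', y) ∈ M} is closed, invariant, nonempty, hence all of X
  have hSclosed : IsClosed {x' : X | (x', y) ∈ M} :=
    hMc.preimage (continuous_id.prodMk continuous_const)
  have horb : MulAction.orbit G x ⊆ {x' : X | (x', y) ∈ M} := by
    rintro _ ⟨g', rfl⟩
    have := hinv g'
    rw [← this]
    exact ⟨(x, y), hxM, rfl⟩
  have hSall : ∀ x' : X, (x', y) ∈ M := fun x' =>
    hSclosed.closure_subset (closure_mono horb (hmin x x'))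
  -- so V × {y} ⊆ U ∩ M, hence V ⊆ fixed points of g
  have hVfix : V ⊆ {x' : X | g • x' = x'} := by
    intro x' hx'
    exact hsub ⟨hVW ⟨hx', hyW⟩, hSall x'⟩
  have : x ∈ interior {x' : X | g • x' = x'} :=
    interior_maximal hVfix hVo hxV
  rw [hfree g hg] at this
  exact this
end

section
/- Let G be a group acting on the Cantor set X such that the action is minimal, and suppose there exists a nontrivial state on the type semigroup W(X,G) (an order-preserving additive map f: W(X,G) → [0,∞] taking some value different from 0 and ∞). Then there exists a G-invariant finitely additive probability measure defined on the clopen subsets of X. -/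
open Pointwise

/-- The equivalence relation defining the type semigroup `W(X,G)`:
`f ∼ g` iff `f` decomposes as a finite sum `∑ hᵢ` with `g = ∑ αₛᵢ(hᵢ)`,
where `αₛ(h)(x) = h(s⁻¹ • x)`. -/
def TypeRel (G : Type*) {X : Type*} [Group G] [TopologicalSpace X] [MulAction G X]
    [ContinuousConstSMul G X] (f g : C(X, ℕ)) : Prop :=
  ∃ (n : ℕ) (h : Fin n → C(X, ℕ)) (s : Fin n → G),
    (∑ i, h i) = f ∧
      (∑ i, (h i).comp ⟨fun x => (s i)⁻¹ • x, continuous_const_smul _⟩) = g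

lemma typeRel_smul {G X : Type*} [Group G] [TopologicalSpace X] [MulAction G X]
    [ContinuousConstSMul G X] (f : C(X, ℕ)) (g : G) :
    TypeRel G f (f.comp ⟨fun x => g⁻¹ • x, continuous_const_smul _⟩) := by
  refine ⟨1, fun _ => f, fun _ => g, by simp, by simp⟩

lemma typeRel_refl {G X : Type*} [Group G] [TopologicalSpace X] [MulAction G X]
    [ContinuousConstSMul G X] (f : C(X, ℕ)) : TypeRel G f f := by
  refine ⟨1, fun _ => f, fun _ => 1, by simp, ?_⟩
  rw [Fin.sum_univ_one]
  ext x
  simp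

/-- The indicator function of a clopen set as a continuous `ℕ`-valued map. -/
noncomputable def indCM {X : Type*} [TopologicalSpace X] (A : Set X) (hA : IsClopen A) :
    C(X, ℕ) :=
  ⟨A.indicator 1, continuous_indicator (by simp [hA]) continuous_const.continuousOn⟩

/-- A nontrivial state on the type semigroup of a minimal action on the Cantor set
induces a G-invariant finitely additive probability measure on the clopen subsets. -/
theorem nontrivial_state_gives_invariant_mean
    {G X : Type*} [Group G] [TopologicalSpace X] [CompactSpace X]
    [TopologicalSpace.MetrizableSpace X] [TotallyDisconnectedSpace X]
    [MulAction G X] [ContinuousConstSMul G X]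
    (hperf : Perfect (Set.univ : Set X))
    (hmin : ∀ x : X, Dense (MulAction.orbit G x))
    (μ : C(X, ℕ) → ENNReal)
    (hadd : ∀ f g : C(X, ℕ), μ (f + g) = μ f + μ g)
    (hinvr : ∀ f g : C(X, ℕ), TypeRel G f g → μ f = μ g)
    (hmono : ∀ f g : C(X, ℕ), (∃ c h : C(X, ℕ), f + c = h ∧ TypeRel G h g) → μ f ≤ μ g)
    (hnontriv : ∃ f : C(X, ℕ), μ f ≠ 0 ∧ μ f ≠ ⊤) :
    ∃ m : Set X → ENNReal, m Set.univ = 1 ∧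
      (∀ A B : Set X, IsClopen A → IsClopen B → Disjoint A B → m (A ∪ B) = m A + m B) ∧
      (∀ (g : G) (A : Set X), IsClopen A → m (g • A) = m A) := by
  classical
  obtain ⟨f, hf0, hftop⟩ := hnontriv
  -- pointwise monotonicity
  have hmono' : ∀ p q : C(X, ℕ), (∀ x, p x ≤ q x) → μ p ≤ μ q := by
    intro p q hpq
    refine hmono p q ⟨⟨fun x => q x - p x, ?_⟩, q, ?_, typeRel_refl q⟩
    · exact (continuous_of_discreteTopology
        (f := fun n : ℕ × ℕ => n.1 - n.2)).comp (q.continuous.prodMk p.continuous)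
    · ext x
      exact Nat.add_sub_cancel' (hpq x)
  -- μ 0 = 0
  have hμ0 : μ (0 : C(X, ℕ)) = 0 := by
    have h00 : μ (0 : C(X, ℕ)) = μ 0 + μ 0 := by
      simpa using hadd 0 0
    have hle : μ (0 : C(X, ℕ)) ≤ μ f := hmono' 0 f (fun x => Nat.zero_le _)
    have hne : μ (0 : C(X, ℕ)) ≠ ⊤ := fun h => hftop (top_le_iff.mp (h ▸ hle))
    have h2 : μ (0 : C(X, ℕ)) + 0 = μ 0 + μ 0 := by rw [add_zero]; exact h00
    exact ((ENNReal.add_right_inj hne).mp h2).symm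
  -- finite additivity over Fin sums
  have hsum : ∀ (n : ℕ) (h : Fin n → C(X, ℕ)), μ (∑ i, h i) = ∑ i, μ (h i) := by
    intro n
    induction n with
    | zero => intro h; simpa using hμ0
    | succ n ih =>
        intro h
        rw [Fin.sum_univ_succ, hadd, ih, Fin.sum_univ_succ]
  -- X is nonempty
  have hXne : Nonempty X := by
    rcases isEmpty_or_nonempty X with hE | hN
    · exfalso
      apply hf0
      have : f = 0 := by ext x; exact (hE.false x).elim
      rw [this, hμ0]
    · exact hN
  -- μ 1 ≠ 0
  have hμ1ne0 : μ (1 : C(X, ℕ)) ≠ 0 := by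
    intro h1
    -- f is bounded: its range is compact hence finite
    have hfin : (Set.range f).Finite := (isCompact_range f.continuous).finite_of_discrete
    obtain ⟨N, hN⟩ := hfin.bddAbove
    have hb : ∀ x, f x ≤ N := fun x => hN ⟨x, rfl⟩
    have hle : μ f ≤ μ (N • (1 : C(X, ℕ))) := hmono' f _ (by intro x; simpa using hb x)
    have hsmul : (N • (1 : C(X, ℕ))) = ∑ _i : Fin N, (1 : C(X, ℕ)) := by simp
    rw [hsmul, hsum] at hle
    apply hf0
    simpa [h1] using le_antisymm (le_trans hle (by simp [h1])) zero_le
  -- μ 1 ≠ ⊤ , using minimality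
  have hμ1netop : μ (1 : C(X, ℕ)) ≠ ⊤ := by
    -- f is not the zero function
    have hfne : ∃ x₀, f x₀ ≠ 0 := by
      by_contra hc
      push_neg at hc
      apply hf0
      have : f = 0 := by ext x; exact hc x
      rw [this, hμ0]
    obtain ⟨x₀, hx₀⟩ := hfne
    set U : Set X := f ⁻¹' {n | n ≠ 0} with hU
    have hUopen : IsOpen U := f.continuous.isOpen_preimage _ (isOpen_discrete _)
    have hUne : U.Nonempty := ⟨x₀, hx₀⟩
    -- open cover by translates of U
    have hcover : (Set.univ : Set X) ⊆ ⋃ g : G, (fun x => g • x) ⁻¹' U := by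
      intro x _
      obtain ⟨y, hy, hyU⟩ := (hmin x).exists_mem_open hUopen hUne
      obtain ⟨g, rfl⟩ := hy
      exact Set.mem_iUnion.mpr ⟨g, hyU⟩
    obtain ⟨t, ht⟩ := isCompact_univ.elim_finite_subcover
      (fun g : G => (fun x => g • x) ⁻¹' U)
      (fun g => hUopen.preimage (continuous_const_smul g)) hcover
    set n := t.card with hn
    set σ : Fin n → G := fun i => ((t.equivFin.symm i : t) : G) with hσ
    have hσcover : ∀ x : X, ∃ i : Fin n, f (σ i • x) ≠ 0 := by
      intro x
      have := ht (Set.mem_univ x)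
      obtain ⟨g, hgmem⟩ := Set.mem_iUnion.mp this
      simp only [Set.mem_iUnion] at hgmem
      obtain ⟨hg, hx⟩ := hgmem
      refine ⟨t.equivFin ⟨g, hg⟩, ?_⟩
      simpa [hσ, hU] using hx
    set F : C(X, ℕ) :=
      ∑ i : Fin n, f.comp ⟨fun x => ((σ i)⁻¹)⁻¹ • x, continuous_const_smul _⟩ with hF
    have hFge : ∀ x, (1 : C(X, ℕ)) x ≤ F x := by
      intro x
      obtain ⟨i, hi⟩ := hσcover x
      have : 1 ≤ f (σ i • x) := Nat.one_le_iff_ne_zero.mpr hi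
      calc (1 : C(X, ℕ)) x = 1 := rfl
        _ ≤ f (σ i • x) := this
        _ ≤ F x := by
            rw [hF]
            have : (∑ j : Fin n,
                f.comp ⟨fun x => ((σ j)⁻¹)⁻¹ • x, continuous_const_smul _⟩) x
                = ∑ j : Fin n, f (σ j • x) := by
              simp [ContinuousMap.sum_apply]
            rw [this]
            exact Finset.single_le_sum (f := fun j => f (σ j • x))
              (fun j _ => Nat.zero_le _) (Finset.mem_univ i)
    have hle1F : μ (1 : C(X, ℕ)) ≤ μ F := hmono' 1 F hFge
    have hμF : μ F = ∑ _i : Fin n, μ f := by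
      rw [hF, hsum]
      refine Finset.sum_congr rfl fun i _ => ?_
      exact (hinvr f _ (typeRel_smul f (σ i)⁻¹)).symm
    intro htop
    rw [htop, top_le_iff, hμF] at hle1F
    have : ∀ i : Fin n, μ f < ⊤ := fun _ => lt_top_iff_ne_top.mpr hftop
    have hlt : (∑ _i : Fin n, μ f) < ⊤ := ENNReal.sum_lt_top.mpr fun i _ => this i
    rw [hle1F] at hlt
    exact lt_irrefl _ hlt
  -- the measure
  refine ⟨fun A => if hA : IsClopen A then μ (indCM A hA) / μ 1 else 0, ?_, ?_, ?_⟩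
  · dsimp only
    rw [dif_pos isClopen_univ]
    have : indCM (Set.univ : Set X) isClopen_univ = 1 := by
      ext x; simp [indCM]
    rw [this]
    exact ENNReal.div_self hμ1ne0 hμ1netop
  · intro A B hA hB hAB
    dsimp only
    rw [dif_pos (hA.union hB), dif_pos hA, dif_pos hB]
    have hind : indCM (A ∪ B) (hA.union hB) = indCM A hA + indCM B hB := by
      ext x
      by_cases hxA : x ∈ A
      · have hxB : x ∉ B := fun hxB => (Set.disjoint_left.mp hAB hxA) hxB
        simp [indCM, Set.indicator, hxA, hxB]
      · by_cases hxB : x ∈ B <;> simp [indCM, Set.indicator, hxA, hxB]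
    rw [hind, hadd]
    exact (ENNReal.div_add_div_same).symm
  · intro g A hA
    dsimp only
    have hgA : IsClopen (g • A) := by
      have : g • A = (fun x => g⁻¹ • x) ⁻¹' A := by
        ext x
        simp [Set.mem_smul_set_iff_inv_smul_mem]
      rw [this]
      exact hA.preimage (continuous_const_smul _)
    rw [dif_pos hgA, dif_pos hA]
    have hind : (indCM A hA).comp ⟨fun x => g⁻¹ • x, continuous_const_smul _⟩
        = indCM (g • A) hgA := by
      ext x
      simp only [ContinuousMap.comp_apply, indCM, ContinuousMap.coe_mk]
      by_cases hx : x ∈ g • A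
      · have : g⁻¹ • x ∈ A := Set.mem_smul_set_iff_inv_smul_mem.mp hx
        simp [Set.indicator, this, hx]
      · have : g⁻¹ • x ∉ A := fun h => hx (Set.mem_smul_set_iff_inv_smul_mem.mpr h)
        simp [Set.indicator, this, hx]
    rw [← hind, ← hinvr _ _ (typeRel_smul (indCM A hA) g)]
end

section
/- Let G act on the Cantor set X with no nontrivial G-invariant Borel measure, and suppose the action has paradoxical comparison. Then the type semigroup W(X,G) is purely infinite: 2[f] ≤ [f] for every [f] ∈ W(X,G). -/
open Pointwise MeasureTheory

section Helpers
variable {G X : Type*} [Group G] [TopologicalSpace X] [MulAction G X] [ContinuousConstSMul G X]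

noncomputable def indCl (A : Set X) (hA : IsClopen A) : C(X, ℕ) :=
  ⟨A.indicator 1, by
    classical
    rw [← Set.piecewise_eq_indicator]
    exact Continuous.piecewise (by simp [hA.frontier_eq]) continuous_const continuous_const⟩

@[simp] lemma indCl_apply (A : Set X) (hA : IsClopen A) (x : X) :
    indCl A hA x = A.indicator 1 x := rfl

lemma trel_refl (a : C(X, ℕ)) : TypeRel G a a := by
  refine ⟨1, ![a], ![1], by simp, ?_⟩
  ext x
  simp

lemma trel_add {a a' b b' : C(X, ℕ)} (h1 : TypeRel G a a') (h2 : TypeRel G b b') :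
    TypeRel G (a + b) (a' + b') := by
  obtain ⟨n, h, s, hs, ht⟩ := h1
  obtain ⟨m, h', s', hs', ht'⟩ := h2
  refine ⟨n + m, Fin.append h h', Fin.append s s', ?_, ?_⟩
  · rw [Fin.sum_univ_add, ← hs, ← hs']
    simp [Fin.append_left, Fin.append_right]
  · rw [Fin.sum_univ_add, ← ht, ← ht']
    congr 1 <;> · apply Finset.sum_congr rfl; intro i _; congr 1 <;>
      simp [Fin.append_left, Fin.append_right]

/-- Sum of indicators of pairwise disjoint sets is the indicator of the union. -/
lemma sum_indicator_disjoint {n : ℕ} (T : Fin n → Set X)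
    (hd : Pairwise fun i j => Disjoint (T i) (T j)) (x : X) :
    ∑ i, (T i).indicator (1 : X → ℕ) x = (⋃ i, T i).indicator 1 x := by
  classical
  by_cases hx : x ∈ ⋃ i, T i
  · obtain ⟨i₀, hi₀⟩ := Set.mem_iUnion.mp hx
    rw [Set.indicator_of_mem hx, Finset.sum_eq_single_of_mem i₀ (Finset.mem_univ _)]
    · simp [Set.indicator_of_mem hi₀]
    · intro j _ hj
      apply Set.indicator_of_notMem
      intro hxj
      exact (hd hj).ne_of_mem hxj hi₀ rfl
  · rw [Set.indicator_of_notMem hx]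
    refine Finset.sum_eq_zero fun i _ => Set.indicator_of_notMem (fun h => hx ?_) _
    exact Set.mem_iUnion.mpr ⟨i, h⟩

end Helpers

lemma clopen_refinement {X : Type*} [TopologicalSpace X] [CompactSpace X]
    [TopologicalSpace.MetrizableSpace X] [TotallyDisconnectedSpace X]
    {A : Set X} (hA : IsClosed A) {n : ℕ} {U : Fin n → Set X}
    (hU : ∀ i, IsOpen (U i)) (hcov : A ⊆ ⋃ i, U i) :
    ∃ V : Fin n → Set X, (∀ i, IsClopen (V i)) ∧ (∀ i, V i ⊆ U i) ∧
      A ⊆ ⋃ i, V i ∧ Pairwise fun i j => Disjoint (V i) (V j) := by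
  classical
  -- choose clopen neighborhoods
  have hW : ∀ x : A, ∃ (W : Set X) (i : Fin n), IsClopen W ∧ (x : X) ∈ W ∧ W ⊆ U i := by
    rintro ⟨x, hx⟩
    obtain ⟨i, hi⟩ := Set.mem_iUnion.mp (hcov hx)
    obtain ⟨W, hW, hxW, hWU⟩ := compact_exists_isClopen_in_isOpen (hU i) hi
    exact ⟨W, i, hW, hxW, hWU⟩
  choose W idx hWcl hxW hWU using hW
  obtain ⟨t, ht⟩ := hA.isCompact.elim_finite_subcover (fun x : A => W x)
    (fun x => (hWcl x).2) (fun x hx => Set.mem_iUnion.mpr ⟨⟨x, hx⟩, hxW _⟩)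
  set V₀ : Fin n → Set X := fun i => ⋃ x ∈ t.filter (fun x => idx x = i), W x with hV₀def
  have hV₀cl : ∀ i, IsClopen (V₀ i) := fun i => isClopen_biUnion_finset fun x _ => hWcl x
  have hV₀U : ∀ i, V₀ i ⊆ U i := by
    intro i
    refine Set.iUnion₂_subset fun x hx => ?_
    have : idx x = i := (Finset.mem_filter.mp hx).2
    exact this ▸ hWU x
  have hV₀cov : A ⊆ ⋃ i, V₀ i := by
    intro x hx
    obtain ⟨y, hy⟩ := Set.mem_iUnion.mp (ht hx)
    simp only [Set.mem_iUnion, exists_prop] at hy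
    exact Set.mem_iUnion.mpr ⟨idx y, Set.mem_biUnion
      (Finset.mem_filter.mpr ⟨hy.1, rfl⟩) hy.2⟩
  refine ⟨fun i => V₀ i \ ⋃ j ∈ Finset.univ.filter (· < i), V₀ j,
    fun i => (hV₀cl i).diff (isClopen_biUnion_finset fun j _ => hV₀cl j),
    fun i => (Set.diff_subset).trans (hV₀U i), ?_, ?_⟩
  · intro x hx
    have hne : (Finset.univ.filter (fun i => x ∈ V₀ i)).Nonempty := by
      obtain ⟨i, hi⟩ := Set.mem_iUnion.mp (hV₀cov hx)
      exact ⟨i, Finset.mem_filter.mpr ⟨Finset.mem_univ _, hi⟩⟩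
    set i₀ := (Finset.univ.filter (fun i => x ∈ V₀ i)).min' hne with hi₀
    have hxi₀ : x ∈ V₀ i₀ := (Finset.mem_filter.mp ((Finset.univ.filter
      (fun i => x ∈ V₀ i)).min'_mem hne)).2
    refine Set.mem_iUnion.mpr ⟨i₀, hxi₀, ?_⟩
    simp only [Set.mem_iUnion, Finset.mem_filter, Finset.mem_univ, true_and, not_exists]
    rintro j hj hxj
    exact absurd (Finset.min'_le _ j (Finset.mem_filter.mpr ⟨Finset.mem_univ _, hxj⟩))
      (not_le.mpr hj)
  · have key : ∀ i j : Fin n, i < j →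
        Disjoint (V₀ i \ ⋃ k ∈ Finset.univ.filter (· < i), V₀ k)
          (V₀ j \ ⋃ k ∈ Finset.univ.filter (· < j), V₀ k) := by
      intro i j hij
      rw [Set.disjoint_left]
      rintro x ⟨hxi, -⟩ ⟨-, hxj⟩
      refine hxj (Set.mem_biUnion ?_ hxi)
      exact Finset.mem_filter.mpr ⟨Finset.mem_univ _, hij⟩
    intro i j hne
    rcases hne.lt_or_gt with h | h
    · exact key i j h
    · exact (key j i h).symm

section Core
variable {G X : Type*} [Group G] [TopologicalSpace X] [CompactSpace X]
    [TopologicalSpace.MetrizableSpace X] [TotallyDisconnectedSpace X]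
    [MulAction G X] [ContinuousConstSMul G X]

lemma indicator_smul_eq (S : Set X) (g : G) (x : X) :
    S.indicator (1 : X → ℕ) (g⁻¹ • x) = (g • S).indicator 1 x := by
  by_cases h : g⁻¹ • x ∈ S
  · rw [Set.indicator_of_mem h, Set.indicator_of_mem (Set.mem_smul_set_iff_inv_smul_mem.mpr h)]
    simp
  · rw [Set.indicator_of_notMem h,
      Set.indicator_of_notMem (fun hx => h (Set.mem_smul_set_iff_inv_smul_mem.mp hx))]

lemma subeq_typerel {A O : Set X} (hA : IsClopen A) (hsub : Subeq G A O) :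
    ∃ (B : Set X) (hB : IsClopen B), B ⊆ O ∧ TypeRel G (indCl A hA) (indCl B hB) := by
  obtain ⟨n, U, g, hUo, hcov, hgU, hdisj⟩ := hsub
  obtain ⟨V, hVcl, hVU, hVcov, hVdisj⟩ := clopen_refinement hA.isClosed hUo hcov
  have hTcl : ∀ i, IsClopen (g i • (A ∩ V i)) := fun i =>
    ⟨((hA.inter (hVcl i)).1).smul (g i), ((hA.inter (hVcl i)).2).smul (g i)⟩
  have hTdisj : Pairwise fun i j => Disjoint (g i • (A ∩ V i)) (g j • (A ∩ V j)) := by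
    intro i j hij
    refine (hdisj hij).mono ?_ ?_ <;>
      exact Set.smul_set_mono ((Set.inter_subset_right).trans (hVU _))
  refine ⟨⋃ i, g i • (A ∩ V i), isClopen_iUnion_of_finite hTcl,
    Set.iUnion_subset fun i =>
      (Set.smul_set_mono ((Set.inter_subset_right).trans (hVU i))).trans (hgU i),
    n, fun i => indCl (A ∩ V i) (hA.inter (hVcl i)), g, ?_, ?_⟩
  · ext x
    simp only [ContinuousMap.coe_sum, Finset.sum_apply, indCl_apply]
    rw [sum_indicator_disjoint _ (fun i j hij => ((hVdisj hij).mono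
      Set.inter_subset_right Set.inter_subset_right)) x]
    congr 1
    rw [← Set.inter_iUnion, Set.inter_eq_left.mpr hVcov]
  · ext x
    simp only [ContinuousMap.coe_sum, Finset.sum_apply, ContinuousMap.comp_apply,
      ContinuousMap.coe_mk, indCl_apply]
    rw [Finset.sum_congr rfl fun i _ => indicator_smul_eq (A ∩ V i) (g i) x]
    exact sum_indicator_disjoint _ hTdisj x

lemma core_clopen (hpc : ParadoxicalComparison G (X := X)) {A : Set X} (hA : IsClopen A) :
    ∃ c : C(X, ℕ), TypeRel G (indCl A hA + indCl A hA + c) (indCl A hA) := by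
  rcases A.eq_empty_or_nonempty with hAe | hne
  · refine ⟨0, 0, ![], ![], ?_, ?_⟩ <;>
    · ext x
      simp [hAe]
  · obtain ⟨O₁, O₂, hO₁, hO₂, -, -, hO₁A, hO₂A, hOdisj, hs₁, hs₂⟩ :=
      hpc A hA.2 hne A hA.1 subset_rfl
    obtain ⟨B₁, hB₁, hB₁O, ht₁⟩ := subeq_typerel hA hs₁
    obtain ⟨B₂, hB₂, hB₂O, ht₂⟩ := subeq_typerel hA hs₂
    have hB₁A : B₁ ⊆ A := hB₁O.trans hO₁A
    have hB₂A : B₂ ⊆ A := hB₂O.trans hO₂A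
    have hBdisj : Disjoint B₁ B₂ := hOdisj.mono hB₁O hB₂O
    set c := indCl (A \ (B₁ ∪ B₂)) (hA.diff (hB₁.union hB₂)) with hc
    have h := trel_add (trel_add ht₁ ht₂) (trel_refl (G := G) c)
    have heq : indCl B₁ hB₁ + indCl B₂ hB₂ + c = indCl A hA := by
      ext x
      simp only [ContinuousMap.add_apply, indCl_apply, hc]
      by_cases h1 : x ∈ B₁
      · rw [Set.indicator_of_mem h1, Set.indicator_of_notMem (hBdisj.ne_of_mem h1 · rfl),
          Set.indicator_of_notMem (fun hx => hx.2 (Or.inl h1)),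
          Set.indicator_of_mem (hB₁A h1)]
        simp
      · by_cases h2 : x ∈ B₂
        · rw [Set.indicator_of_notMem h1, Set.indicator_of_mem h2,
            Set.indicator_of_notMem (fun hx => hx.2 (Or.inr h2)),
            Set.indicator_of_mem (hB₂A h2)]
          simp
        · by_cases h3 : x ∈ A
          · rw [Set.indicator_of_notMem h1, Set.indicator_of_notMem h2,
              Set.indicator_of_mem (show x ∈ A \ (B₁ ∪ B₂) from ⟨h3, fun hx => hx.elim h1 h2⟩),
              Set.indicator_of_mem h3]
            simp
          · rw [Set.indicator_of_notMem h1, Set.indicator_of_notMem h2,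
              Set.indicator_of_notMem (fun hx => h3 hx.1), Set.indicator_of_notMem h3]
            simp
    rw [heq] at h
    exact ⟨c, h⟩

end Core

section Main
variable {G X : Type*} [Group G] [TopologicalSpace X] [CompactSpace X]
    [TopologicalSpace.MetrizableSpace X] [TotallyDisconnectedSpace X]
    [MulAction G X] [ContinuousConstSMul G X]

lemma main_aux (hpc : ParadoxicalComparison G (X := X)) :
    ∀ (N : ℕ) (f : C(X, ℕ)), (∀ x, f x ≤ N) → ∃ c : C(X, ℕ), TypeRel G (f + f + c) f := by
  intro N
  induction N with
  | zero =>
    intro f hb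
    have hf : f = 0 := ContinuousMap.ext fun x => Nat.le_zero.mp (hb x)
    subst hf
    exact ⟨0, 0, ![], ![], by simp, by simp⟩
  | succ N ih =>
    intro f hb
    have hA : IsClopen (f ⁻¹' Set.Ici 1) :=
      ⟨(isClosed_discrete _).preimage f.continuous, (isOpen_discrete _).preimage f.continuous⟩
    set A := f ⁻¹' Set.Ici 1 with hAdef
    set f' : C(X, ℕ) := ⟨fun x => f x - 1, (continuous_of_discreteTopology (α := ℕ) (β := ℕ) (f := fun k => k - 1)).comp f.continuous⟩
      with hf'def
    have hsplit : f = indCl A hA + f' := by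
      ext x
      simp only [ContinuousMap.add_apply, indCl_apply, hf'def, ContinuousMap.coe_mk]
      by_cases hx : x ∈ A
      · have : 1 ≤ f x := hx
        rw [Set.indicator_of_mem hx]
        simp only [Pi.one_apply]
        omega
      · have : ¬ 1 ≤ f x := hx
        rw [Set.indicator_of_notMem hx]
        omega
    obtain ⟨cA, hcA⟩ := core_clopen hpc hA
    obtain ⟨c', hc'⟩ := ih f' (fun x => by
      have := hb x
      simp only [hf'def, ContinuousMap.coe_mk]
      omega)
    refine ⟨cA + c', ?_⟩
    have h := trel_add hcA hc'
    have e1 : indCl A hA + indCl A hA + cA + (f' + f' + c') = f + f + (cA + c') := by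
      rw [hsplit]; ring
    have e2 : indCl A hA + f' = f := hsplit.symm
    rwa [e1, e2] at h

end Main

/-- Paradoxical comparison implies that the type semigroup is purely infinite:
`2[f] ≤ [f]` in the algebraic order for every `[f] ∈ W(X,G)`. -/
theorem paradoxicalComparison_typeSemigroup_purely_infinite
    {G X : Type*} [Group G] [TopologicalSpace X] [CompactSpace X]
    [TopologicalSpace.MetrizableSpace X] [TotallyDisconnectedSpace X]
    [MulAction G X] [ContinuousConstSMul G X]
    [MeasurableSpace X] [BorelSpace X]
    (hperf : Perfect (Set.univ : Set X))
    (hnomeas : ¬ ∃ μ : Measure X, (∀ (g : G) (A : Set X), μ (g • A) = μ A) ∧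
        ∃ O : Set X, IsClopen O ∧ 0 < μ O ∧ μ O < ⊤)
    (hpc : ParadoxicalComparison G (X := X)) :
    ∀ f : C(X, ℕ), ∃ c : C(X, ℕ), TypeRel G (f + f + c) f := by
  intro f
  have hfin : (Set.range f).Finite :=
    (isCompact_range f.continuous).finite ⟨by infer_instance⟩
  obtain ⟨N, hN⟩ := hfin.bddAbove
  exact main_aux hpc N f fun x => hN ⟨x, rfl⟩
end

section
/- Let G be a group acting by homeomorphisms on a compact Hausdorff space X, and suppose there is no G-invariant regular Borel probability measure on X and the action has dynamical comparison. Then the action has paradoxical comparison: for every nonempty open O and every closed F ⊆ O there exist disjoint nonempty open O₁, O₂ ⊆ O with F ≺ O₁ and F ≺ O₂. -/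
open Pointwise MeasureTheory

theorem dynamicalComparison_implies_paradoxicalComparison
    {G X : Type*} [Group G] [TopologicalSpace X] [CompactSpace X] [T2Space X]
    [MulAction G X] [ContinuousConstSMul G X] [MeasurableSpace X] [BorelSpace X]
    (hnom : ¬ ∃ μ : Measure X, IsProbabilityMeasure μ ∧ μ.Regular ∧
        ∀ (g : G) (A : Set X), μ (g • A) = μ A)
    (hdc : ∀ V O : Set X, IsOpen V → IsOpen O → O.Nonempty →
      (∀ μ : Measure X, IsProbabilityMeasure μ → μ.Regular →
        (∀ (g : G) (A : Set X), μ (g • A) = μ A) → μ V < μ O) →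
      ∀ F : Set X, IsClosed F → F ⊆ V → Subeq G F O) :
    ∀ O : Set X, IsOpen O → O.Nonempty → ∀ F : Set X, IsClosed F → F ⊆ O →
      ∃ O₁ O₂ : Set X, IsOpen O₁ ∧ IsOpen O₂ ∧ O₁.Nonempty ∧ O₂.Nonempty ∧
        O₁ ⊆ O ∧ O₂ ⊆ O ∧ Disjoint O₁ O₂ ∧ Subeq G F O₁ ∧ Subeq G F O₂ := by
  intro O hO hOne F hF hFO
  -- the measure condition is vacuous
  have hvac : ∀ V W : Set X,
      (∀ μ : Measure X, IsProbabilityMeasure μ → μ.Regular →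
        (∀ (g : G) (A : Set X), μ (g • A) = μ A) → μ V < μ W) := by
    intro V W μ hp hr hi
    exact absurd ⟨μ, hp, hr, hi⟩ hnom
  -- first, X is not a subsingleton
  have hnss : ¬ Subsingleton X := by
    intro hss
    obtain ⟨x⟩ : Nonempty X := ⟨hOne.choose⟩
    refine hnom ⟨Measure.dirac x, inferInstance, inferInstance, ?_⟩
    intro g A
    rcases A.eq_empty_or_nonempty with rfl | ⟨a, ha⟩
    · rw [Set.smul_set_empty]
    · have hA : A = Set.univ := Set.eq_univ_iff_forall.2 fun y =>
        (Subsingleton.elim y a) ▸ ha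
      rw [hA, Set.smul_set_univ]
  -- O contains two distinct points
  have h2 : ∃ a ∈ O, ∃ b ∈ O, a ≠ b := by
    by_contra h
    push_neg at h
    obtain ⟨x, hx⟩ := hOne
    have hOx : O = {x} := by
      apply Set.eq_singleton_iff_unique_mem.2
      exact ⟨hx, fun y hy => h y hy x hx⟩
    obtain ⟨n, U, g, hU, hcov, hsub, hdisj⟩ :=
      hdc Set.univ O isOpen_univ hO ⟨x, hx⟩ (hvac _ _) Set.univ isClosed_univ
        (subset_refl _)
    refine hnss ⟨fun y z => ?_⟩
    obtain ⟨i, hi⟩ := Set.mem_iUnion.1 (hcov (Set.mem_univ y))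
    obtain ⟨j, hj⟩ := Set.mem_iUnion.1 (hcov (Set.mem_univ z))
    have hiy : g i • y ∈ ({x} : Set X) := hOx ▸ hsub i (Set.smul_mem_smul_set hi)
    have hjz : g j • z ∈ ({x} : Set X) := hOx ▸ hsub j (Set.smul_mem_smul_set hj)
    rcases eq_or_ne i j with rfl | hij
    · have : g i • y = g i • z := by
        rw [Set.mem_singleton_iff.1 hiy, Set.mem_singleton_iff.1 hjz]
      exact smul_left_cancel (g i) this
    · exfalso
      have h1 : g i • y ∈ g i • U i := Set.smul_mem_smul_set hi
      have h2 : g j • z ∈ g j • U j := Set.smul_mem_smul_set hj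
      rw [Set.mem_singleton_iff.1 hiy] at h1
      rw [Set.mem_singleton_iff.1 hjz] at h2
      exact (hdisj hij).le_bot ⟨h1, h2⟩
  obtain ⟨a, ha, b, hb, hab⟩ := h2
  obtain ⟨Ua, Ub, hUa, hUb, haUa, hbUb, hUab⟩ := t2_separation hab
  refine ⟨O ∩ Ua, O ∩ Ub, hO.inter hUa, hO.inter hUb, ⟨a, ha, haUa⟩, ⟨b, hb, hbUb⟩,
    Set.inter_subset_left, Set.inter_subset_left,
    hUab.mono Set.inter_subset_right Set.inter_subset_right, ?_, ?_⟩
  · exact hdc O (O ∩ Ua) hO (hO.inter hUa) ⟨a, ha, haUa⟩ (hvac _ _) F hF hFO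
  · exact hdc O (O ∩ Ub) hO (hO.inter hUb) ⟨b, hb, hbUb⟩ (hvac _ _) F hF hFO
end

section
/- Let G be a group acting by homeomorphisms on a compact Hausdorff space X with paradoxical comparison. Then for every n ≥ 1 and every nonempty open set O the relation (O,...,O) ≺ O (n copies) holds: for every closed F ⊆ O there exist pairwise disjoint nonempty open subsets O₁,...,Oₙ of O with F ≺ Oᵢ for all i. -/
open Pointwise

/-- Trivially, a closed subset of `O` is subequivalent to `O` (take the cover `O` itself and
the identity group element). -/
lemma subeq_of_subset (G : Type*) {X : Type*} [Group G] [MulAction G X] [TopologicalSpace X]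
    {F O : Set X} (hO : IsOpen O) (hFO : F ⊆ O) : Subeq G F O := by
  refine ⟨1, fun _ => O, fun _ => 1, fun _ => hO,
    fun x hx => Set.mem_iUnion.2 ⟨0, hFO hx⟩, fun _ => by simp, ?_⟩
  intro i j hij
  exact absurd (Fin.ext (by omega)) hij

/-- Factorization: if `F ≺ M` with `F` closed, then there is a closed `K ⊆ M` such that every
subequivalence of `K` extends to one of `F`. -/
lemma subeq_factor {G X : Type*} [Group G] [TopologicalSpace X] [CompactSpace X] [T2Space X]
    [MulAction G X] [ContinuousConstSMul G X]
    {F M : Set X} (hF : IsClosed F) (h1 : Subeq G F M) :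
    ∃ K : Set X, IsClosed K ∧ K ⊆ M ∧ ∀ O' : Set X, Subeq G K O' → Subeq G F O' := by
  obtain ⟨n, U, g, hUo, hFU, hUM, hUdisj⟩ := h1
  obtain ⟨V, hFV, hVo, hVc⟩ := exists_subset_iUnion_closure_subset hF hUo
    (fun x _ => Set.toFinite _) hFU
  refine ⟨⋃ i, g i • closure (V i), isClosed_iUnion_of_finite
      (fun i => (isClosed_closure).smul (g i)), ?_, ?_⟩
  · exact Set.iUnion_subset fun i => (Set.smul_set_mono (hVc i)).trans (hUM i)
  · rintro O' ⟨m, W, h, hWo, hKW, hWO, hWdisj⟩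
    classical
    let e : Fin n × Fin m ≃ Fin (n * m) := finProdFinEquiv
    refine ⟨n * m,
      fun k => V (e.symm k).1 ∩ (g (e.symm k).1)⁻¹ • W (e.symm k).2,
      fun k => h (e.symm k).2 * g (e.symm k).1, ?_, ?_, ?_, ?_⟩
    · exact fun k => (hVo _).inter ((hWo _).smul _)
    · intro x hx
      obtain ⟨i, hi⟩ := Set.mem_iUnion.1 (hFV hx)
      have hK : g i • x ∈ ⋃ j, W j := by
        refine hKW (Set.mem_iUnion.2 ⟨i, ?_⟩)
        exact Set.smul_mem_smul_set (subset_closure hi)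
      obtain ⟨j, hj⟩ := Set.mem_iUnion.1 hK
      refine Set.mem_iUnion.2 ⟨e (i, j), ?_⟩
      simp only [Equiv.symm_apply_apply]
      exact ⟨hi, Set.mem_inv_smul_set_iff.2 hj⟩
    · intro k
      set i := (e.symm k).1
      set j := (e.symm k).2
      calc (h j * g i) • (V i ∩ (g i)⁻¹ • W j)
          = h j • (g i • (V i ∩ (g i)⁻¹ • W j)) := by rw [mul_smul]
        _ = h j • (g i • V i ∩ W j) := by rw [Set.smul_set_inter, smul_inv_smul]
        _ ⊆ h j • W j := Set.smul_set_mono Set.inter_subset_right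
        _ ⊆ O' := hWO j
    · intro k k' hkk'
      set i := (e.symm k).1 with hidef
      set j := (e.symm k).2 with hjdef
      set i' := (e.symm k').1 with hi'def
      set j' := (e.symm k').2 with hj'def
      have key : ∀ (a : Fin n) (b : Fin m),
          (h b * g a) • (V a ∩ (g a)⁻¹ • W b) ⊆ h b • (g a • V a ∩ W b) := by
        intro a b
        rw [mul_smul, Set.smul_set_inter, smul_inv_smul]
      rcases eq_or_ne j j' with hj | hj
      · have hii' : i ≠ i' := by
          intro hii
          apply hkk'
          have : (e.symm k) = (e.symm k') := Prod.ext hii hj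
          simpa using congrArg e this
        have hdisj : Disjoint (g i • V i ∩ W j) (g i' • V i' ∩ W j') := by
          refine Disjoint.mono ?_ ?_ (hUdisj hii')
          · exact Set.inter_subset_left.trans (Set.smul_set_mono
              ((subset_closure.trans (hVc i)) : V i ⊆ U i))
          · exact Set.inter_subset_left.trans (Set.smul_set_mono
              ((subset_closure.trans (hVc i')) : V i' ⊆ U i'))
        refine Disjoint.mono (key i j) (key i' j') ?_
        rw [hj]
        exact (Set.disjoint_smul_set (a := h j')).2 (hj ▸ hdisj)
      · refine Disjoint.mono ((key i j).trans (Set.smul_set_mono Set.inter_subset_right))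
          ((key i' j').trans (Set.smul_set_mono Set.inter_subset_right)) (hWdisj hj)

theorem paradoxicalComparison_n_fold
    {G X : Type*} [Group G] [TopologicalSpace X] [CompactSpace X] [T2Space X]
    [MulAction G X] [ContinuousConstSMul G X]
    (hpc : ParadoxicalComparison G (X := X)) :
    ∀ n : ℕ, 1 ≤ n → ∀ O : Set X, IsOpen O → O.Nonempty →
      ∀ F : Set X, IsClosed F → F ⊆ O →
        ∃ Os : Fin n → Set X, (∀ i, IsOpen (Os i)) ∧ (∀ i, (Os i).Nonempty) ∧
          (∀ i, Os i ⊆ O) ∧ (Pairwise fun i j => Disjoint (Os i) (Os j)) ∧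
          ∀ i, Subeq G F (Os i) := by
  have main : ∀ m : ℕ, ∀ O : Set X, IsOpen O → O.Nonempty →
      ∀ F : Set X, IsClosed F → F ⊆ O →
        ∃ Os : Fin (m + 1) → Set X, (∀ i, IsOpen (Os i)) ∧ (∀ i, (Os i).Nonempty) ∧
          (∀ i, Os i ⊆ O) ∧ (Pairwise fun i j => Disjoint (Os i) (Os j)) ∧
          ∀ i, Subeq G F (Os i) := by
    intro m
    induction m with
    | zero =>
      intro O hO hOne F hF hFO
      exact ⟨fun _ => O, fun _ => hO, fun _ => hOne, fun _ => subset_rfl,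
        fun i j hij => absurd (Fin.ext (by omega)) hij,
        fun _ => subeq_of_subset G hO hFO⟩
    | succ m ih =>
      intro O hO hOne F hF hFO
      obtain ⟨Os, hOso, hOsne, hOsO, hOsdisj, hOssub⟩ := ih O hO hOne F hF hFO
      classical
      set L := Fin.last m
      obtain ⟨K, hKc, hKM, hKext⟩ := subeq_factor hF (hOssub L)
      obtain ⟨O₁, O₂, hO₁o, hO₂o, hO₁ne, hO₂ne, hO₁s, hO₂s, h12, hK1, hK2⟩ :=
        hpc (Os L) (hOso L) (hOsne L) K hKc hKM
      set A : Fin (m + 1) → Set X := Function.update Os L O₁ with hA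
      have hAsub : ∀ i, A i ⊆ Os i := by
        intro i
        by_cases hi : i = L
        · subst hi; simp [hA, hO₁s]
        · simp [hA, Function.update_of_ne hi]
      refine ⟨Fin.snoc A O₂, ?_, ?_, ?_, ?_, ?_⟩
      · intro i
        refine Fin.lastCases ?_ (fun i => ?_) i <;> simp [Fin.snoc_last, Fin.snoc_castSucc]
        · exact hO₂o
        · by_cases hi : i = L
          · subst hi; simpa [hA] using hO₁o
          · simpa [hA, Function.update_of_ne hi] using hOso i
      · intro i
        refine Fin.lastCases ?_ (fun i => ?_) i <;> simp [Fin.snoc_last, Fin.snoc_castSucc]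
        · exact hO₂ne
        · by_cases hi : i = L
          · subst hi; simpa [hA] using hO₁ne
          · simpa [hA, Function.update_of_ne hi] using hOsne i
      · intro i
        refine Fin.lastCases ?_ (fun i => ?_) i
        · simpa [Fin.snoc_last] using hO₂s.trans (hOsO L)
        · simpa [Fin.snoc_castSucc] using (hAsub i).trans (hOsO i)
      · have hAO₂ : ∀ i : Fin (m + 1), Disjoint (A i) O₂ := by
          intro i
          by_cases hi : i = L
          · subst hi; simpa [hA] using h12
          · exact Disjoint.mono (hAsub i) hO₂s (hOsdisj hi)
        have hAdisj : ∀ i j : Fin (m + 1), i ≠ j → Disjoint (A i) (A j) := by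
          intro i j hij
          by_cases hi : i = L
          · subst hi
            have hAL : A L = O₁ := by simp [hA]
            rw [hAL]
            exact Disjoint.mono hO₁s (hAsub j) (hOsdisj hij)
          · by_cases hj : j = L
            · subst hj
              have hAL : A L = O₁ := by simp [hA]
              rw [hAL]
              exact Disjoint.mono (hAsub i) hO₁s (hOsdisj hij)
            · exact Disjoint.mono (hAsub i) (hAsub j) (hOsdisj hij)
        intro i j hij
        induction i using Fin.lastCases with
        | last =>
          induction j using Fin.lastCases with
          | last => exact absurd rfl hij
          | cast j' =>
            simp only [Fin.snoc_last, Fin.snoc_castSucc]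
            exact (hAO₂ j').symm
        | cast i' =>
          induction j using Fin.lastCases with
          | last =>
            simp only [Fin.snoc_last, Fin.snoc_castSucc]
            exact hAO₂ i'
          | cast j' =>
            have hij' : i' ≠ j' := fun hc => hij (by rw [hc])
            simp only [Fin.snoc_castSucc]
            exact hAdisj i' j' hij'
      · intro i
        refine Fin.lastCases ?_ (fun i' => ?_) i
        · simpa [Fin.snoc_last] using hKext O₂ hK2
        · simp only [Fin.snoc_castSucc]
          by_cases hi : i' = L
          · subst hi; simpa [hA] using hKext O₁ hK1
          · simpa [hA, Function.update_of_ne hi] using hOssub i'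
  intro n hn
  obtain ⟨m, rfl⟩ := Nat.exists_eq_add_of_le' hn
  exact main m
end
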